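/- Let (A, φ) be an algebraic probability space and B an additive increment process in (A, φ) that is order invariant and has pyramidally independent increments. For N ≥ 1 and 1 ≤ i ≤ N put b_i^{(N)} := B((i−1)/N, i/N). Then for every n ≥ 1, every injective tuple i : {1,…,n} → {1,…,N}, and every N ≥ max_m i(m), one has N^n · φ(b_{i(1)}^{(N)} ⋯ b_{i(n)}^{(N)}) = φ(B(0,1))^n; in particular the limit as N → ∞ of N^n · φ(b_{i(1)}^{(N)} ⋯ b_{i(n)}^{(N)}) equals φ(B(0,1))^n. -/

import Mathlib

section Aux

variable {A : Type*} [Ring A] [Algebra ℂ A]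
    (φ : A →ₗ[ℂ] ℂ) (B : ℝ → ℝ → A)

/-- Translation invariance of single-increment moments. -/
lemma aux_translate
    (horder : ∀ (n : ℕ), 1 ≤ n → ∀ I : Fin n → ℝ × ℝ,
      (∀ m, (I m).1 < (I m).2) →
      (∀ a b : Fin n, a ≠ b →
        Disjoint (Set.Ico (I a).1 (I a).2) (Set.Ico (I b).1 (I b).2)) →
      ∀ τ : Fin n → ℝ,
      (∀ a b : Fin n, (I a).2 ≤ (I b).1 → (I a).2 + τ a ≤ (I b).1 + τ b) →
      φ (List.ofFn fun m => B ((I m).1 + τ m) ((I m).2 + τ m)).prod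
        = φ (List.ofFn fun m => B (I m).1 (I m).2).prod)
    (s t c : ℝ) (hst : s < t) :
    φ (B (s + c) (t + c)) = φ (B s t) := by
  have h := horder 1 le_rfl (fun _ => (s, t)) (fun _ => hst)
    (fun a b hab => absurd (Subsingleton.elim a b) hab)
    (fun _ => c)
    (fun a b h => absurd hst (not_lt.mpr h))
  simpa using h

/-- Factorization of moments over pairwise disjoint intervals. -/
lemma aux_factor (hφ1 : φ 1 = 1)
    (hpyr : ∀ u v : ℝ, u < v →
      ∀ b ∈ Algebra.adjoin ℂ
        {x : A | ∃ s t : ℝ, s < t ∧ Set.Ico s t ⊆ Set.Ico u v ∧ x = B s t},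
      ∀ a₁ ∈ Algebra.adjoin ℂ
        {x : A | ∃ s t : ℝ, s < t ∧ Set.Ico s t ⊆ (Set.Ico u v)ᶜ ∧ x = B s t},
      ∀ a₂ ∈ Algebra.adjoin ℂ
        {x : A | ∃ s t : ℝ, s < t ∧ Set.Ico s t ⊆ (Set.Ico u v)ᶜ ∧ x = B s t},
      φ (a₁ * b * a₂) = φ (a₁ * a₂) * φ b) :
    ∀ (n : ℕ) (I : Fin n → ℝ × ℝ), (∀ m, (I m).1 < (I m).2) →
      (∀ a b : Fin n, a ≠ b →
        Disjoint (Set.Ico (I a).1 (I a).2) (Set.Ico (I b).1 (I b).2)) →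
      φ (List.ofFn fun m => B (I m).1 (I m).2).prod
        = ∏ m, φ (B (I m).1 (I m).2) := by
  intro n
  induction n with
  | zero => intro I _ _; simp [hφ1]
  | succ n ih =>
    intro I hlt hdisj
    set J := I (Fin.last n) with hJ
    have hprod : (List.ofFn fun m : Fin (n+1) => B (I m).1 (I m).2).prod
        = (List.ofFn fun m : Fin n => B (I m.castSucc).1 (I m.castSucc).2).prod
          * B J.1 J.2 := by
      rw [List.ofFn_succ' (fun m : Fin (n+1) => B (I m).1 (I m).2)]
      simp [List.concat_eq_append, hJ]
    have ha₁ : (List.ofFn fun m : Fin n => B (I m.castSucc).1 (I m.castSucc).2).prod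
        ∈ Algebra.adjoin ℂ
          {x : A | ∃ s t : ℝ, s < t ∧ Set.Ico s t ⊆ (Set.Ico J.1 J.2)ᶜ ∧ x = B s t} := by
      apply Subalgebra.list_prod_mem
      rw [List.forall_mem_ofFn_iff]
      intro m
      apply Algebra.subset_adjoin
      refine ⟨(I m.castSucc).1, (I m.castSucc).2, hlt _, ?_, rfl⟩
      rw [Set.subset_compl_iff_disjoint_right]
      exact hdisj _ _ (Fin.castSucc_lt_last m).ne
    have hb : B J.1 J.2 ∈ Algebra.adjoin ℂ
        {x : A | ∃ s t : ℝ, s < t ∧ Set.Ico s t ⊆ Set.Ico J.1 J.2 ∧ x = B s t} :=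
      Algebra.subset_adjoin ⟨J.1, J.2, hlt _, subset_rfl, rfl⟩
    have key := hpyr J.1 J.2 (hlt _) _ hb _ ha₁ 1 (Subalgebra.one_mem _)
    rw [mul_one, mul_one] at key
    rw [hprod, key, ih (fun m => I m.castSucc) (fun m => hlt _)
      (fun a b hab => hdisj _ _ (fun h => hab (Fin.castSucc_injective n h))),
      Fin.prod_univ_castSucc]

/-- Scaling: `φ(B 0 1) = N · φ(B 0 (1/N))`. -/
lemma aux_scale
    (hadd : ∀ s t u : ℝ, s < t → t < u → B s u = B s t + B t u)
    (horder : ∀ (n : ℕ), 1 ≤ n → ∀ I : Fin n → ℝ × ℝ,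
      (∀ m, (I m).1 < (I m).2) →
      (∀ a b : Fin n, a ≠ b →
        Disjoint (Set.Ico (I a).1 (I a).2) (Set.Ico (I b).1 (I b).2)) →
      ∀ τ : Fin n → ℝ,
      (∀ a b : Fin n, (I a).2 ≤ (I b).1 → (I a).2 + τ a ≤ (I b).1 + τ b) →
      φ (List.ofFn fun m => B ((I m).1 + τ m) ((I m).2 + τ m)).prod
        = φ (List.ofFn fun m => B (I m).1 (I m).2).prod)
    (N : ℕ) (hN : 1 ≤ N) :
    φ (B 0 1) = (N : ℂ) * φ (B 0 (1 / (N : ℝ))) := by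
  have hNpos : (0 : ℝ) < N := by exact_mod_cast hN
  have key : ∀ m : ℕ, 1 ≤ m → m ≤ N →
      φ (B 0 ((m : ℝ) / N)) = (m : ℂ) * φ (B 0 (1 / (N : ℝ))) := by
    intro m hm
    induction m, hm using Nat.le_induction with
    | base => intro _; norm_num
    | succ m hm ih =>
      intro hmN
      have hmN' : m ≤ N := le_trans (Nat.le_succ m) hmN
      have h0m : (0 : ℝ) < (m : ℝ) / N := by
        have : (0:ℝ) < (m:ℝ) := by exact_mod_cast hm
        positivity
      have hmm : (m : ℝ) / N < ((m : ℝ) + 1) / N := by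
        gcongr
        linarith
      have htr := aux_translate φ B horder 0 (1 / (N : ℝ)) ((m : ℝ) / N)
        (by positivity)
      rw [show (0:ℝ) + (m:ℝ)/N = (m:ℝ)/N by ring,
        show 1/(N:ℝ) + (m:ℝ)/N = ((m:ℝ)+1)/N by ring] at htr
      push_cast
      rw [hadd 0 ((m:ℝ)/N) (((m:ℝ)+1)/N) h0m hmm, map_add, ih hmN', htr]
      ring
  have h := key N hN le_rfl
  rwa [div_self hNpos.ne'] at h

end Aux

/-- For an order invariant additive increment process with
pyramidally independent increments, setting `b_i^{(N)} = B((i-1)/N, i/N)`, for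
every injective tuple `i : {1,…,n} → ℕ` (with values `≥ 1`) and every
`N ≥ max_m i(m)` one has `N^n φ(b_{i(1)}^{(N)} ⋯ b_{i(n)}^{(N)}) = φ(B(0,1))^n`;
in particular `lim_N N^n φ(b_{i(1)}^{(N)} ⋯ b_{i(n)}^{(N)}) = φ(B(0,1))^n`. -/
theorem injective_tuple_moment_of_order_invariant_process
    {A : Type*} [Ring A] [Algebra ℂ A]
    (φ : A →ₗ[ℂ] ℂ) (hφ1 : φ 1 = 1)
    (B : ℝ → ℝ → A)
    -- additivity of increments
    (hadd : ∀ s t u : ℝ, s < t → t < u → B s u = B s t + B t u)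
    -- order invariance
    (horder : ∀ (n : ℕ), 1 ≤ n → ∀ I : Fin n → ℝ × ℝ,
      (∀ m, (I m).1 < (I m).2) →
      (∀ a b : Fin n, a ≠ b →
        Disjoint (Set.Ico (I a).1 (I a).2) (Set.Ico (I b).1 (I b).2)) →
      ∀ τ : Fin n → ℝ,
      (∀ a b : Fin n, (I a).2 ≤ (I b).1 → (I a).2 + τ a ≤ (I b).1 + τ b) →
      φ (List.ofFn fun m => B ((I m).1 + τ m) ((I m).2 + τ m)).prod
        = φ (List.ofFn fun m => B (I m).1 (I m).2).prod)
    -- pyramidally independent increments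
    (hpyr : ∀ u v : ℝ, u < v →
      ∀ b ∈ Algebra.adjoin ℂ
        {x : A | ∃ s t : ℝ, s < t ∧ Set.Ico s t ⊆ Set.Ico u v ∧ x = B s t},
      ∀ a₁ ∈ Algebra.adjoin ℂ
        {x : A | ∃ s t : ℝ, s < t ∧ Set.Ico s t ⊆ (Set.Ico u v)ᶜ ∧ x = B s t},
      ∀ a₂ ∈ Algebra.adjoin ℂ
        {x : A | ∃ s t : ℝ, s < t ∧ Set.Ico s t ⊆ (Set.Ico u v)ᶜ ∧ x = B s t},
      φ (a₁ * b * a₂) = φ (a₁ * a₂) * φ b) :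
    ∀ n : ℕ, 1 ≤ n → ∀ i : Fin n → ℕ, (∀ m, 1 ≤ i m) →
    Function.Injective i →
    (∀ N : ℕ, (∀ m, i m ≤ N) →
      (N : ℂ) ^ n * φ (List.ofFn fun m =>
          B (((i m : ℝ) - 1) / (N : ℝ)) ((i m : ℝ) / (N : ℝ))).prod
        = (φ (B 0 1)) ^ n) ∧
    Filter.Tendsto (fun N : ℕ =>
        (N : ℂ) ^ n * φ (List.ofFn fun m =>
          B (((i m : ℝ) - 1) / (N : ℝ)) ((i m : ℝ) / (N : ℝ))).prod)
      Filter.atTop (nhds ((φ (B 0 1)) ^ n)) := by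
  intro n hn i hi1 hinj
  have main : ∀ N : ℕ, (∀ m, i m ≤ N) →
      (N : ℂ) ^ n * φ (List.ofFn fun m =>
          B (((i m : ℝ) - 1) / (N : ℝ)) ((i m : ℝ) / (N : ℝ))).prod
        = (φ (B 0 1)) ^ n := by
    intro N hN
    have hN1 : 1 ≤ N := le_trans (hi1 ⟨0, hn⟩) (hN ⟨0, hn⟩)
    have hNpos : (0 : ℝ) < N := by exact_mod_cast hN1
    set I : Fin n → ℝ × ℝ :=
      fun m => ((((i m : ℝ) - 1) / (N : ℝ)), ((i m : ℝ) / (N : ℝ))) with hI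
    have hlt : ∀ m, (I m).1 < (I m).2 := by
      intro m
      simp only [hI]
      gcongr
      linarith
    have hdisj : ∀ a b : Fin n, a ≠ b →
        Disjoint (Set.Ico (I a).1 (I a).2) (Set.Ico (I b).1 (I b).2) := by
      intro a b hab
      have hne : i a ≠ i b := fun h => hab (hinj h)
      rw [Set.Ico_disjoint_Ico]
      rcases hne.lt_or_gt with h | h
      · have : (i a : ℝ) ≤ (i b : ℝ) - 1 := by
          have : (i a : ℕ) + 1 ≤ i b := h
          have := Nat.cast_le (α := ℝ).mpr this
          push_cast at this; linarith
        refine le_trans (min_le_left _ _) (le_trans ?_ (le_max_right _ _))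
        simp only [hI]; gcongr
      · have : (i b : ℝ) ≤ (i a : ℝ) - 1 := by
          have : (i b : ℕ) + 1 ≤ i a := h
          have := Nat.cast_le (α := ℝ).mpr this
          push_cast at this; linarith
        refine le_trans (min_le_right _ _) (le_trans ?_ (le_max_left _ _))
        simp only [hI]; gcongr
    have hfac := aux_factor φ B hφ1 hpyr n I hlt hdisj
    have hone : ∀ m, φ (B (I m).1 (I m).2) = φ (B 0 (1 / (N : ℝ))) := by
      intro m
      have htr := aux_translate φ B horder 0 (1 / (N : ℝ))
        (((i m : ℝ) - 1) / (N : ℝ)) (by positivity)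
      rw [show (0:ℝ) + ((i m : ℝ) - 1) / (N : ℝ) = ((i m : ℝ) - 1) / (N : ℝ) by ring,
        show 1/(N:ℝ) + ((i m : ℝ) - 1) / (N : ℝ) = (i m : ℝ) / (N : ℝ) by ring] at htr
      simp only [hI]
      exact htr
    have hscale := aux_scale φ B hadd horder N hN1
    have hNne : (N : ℂ) ≠ 0 := Nat.cast_ne_zero.mpr (by omega)
    calc (N : ℂ) ^ n * φ (List.ofFn fun m => B (I m).1 (I m).2).prod
        = (N : ℂ) ^ n * ∏ m, φ (B (I m).1 (I m).2) := by rw [hfac]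
      _ = (N : ℂ) ^ n * (φ (B 0 (1 / (N : ℝ)))) ^ n := by
          rw [Finset.prod_congr rfl (fun m _ => hone m), Finset.prod_const,
            Finset.card_univ, Fintype.card_fin]
      _ = ((N : ℂ) * φ (B 0 (1 / (N : ℝ)))) ^ n := by rw [mul_pow]
      _ = (φ (B 0 1)) ^ n := by rw [← hscale]
  refine ⟨main, ?_⟩
  have hev : (fun _ : ℕ => (φ (B 0 1)) ^ n) =ᶠ[Filter.atTop]
      (fun N : ℕ => (N : ℂ) ^ n * φ (List.ofFn fun m =>
          B (((i m : ℝ) - 1) / (N : ℝ)) ((i m : ℝ) / (N : ℝ))).prod) := by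
    filter_upwards [Filter.eventually_ge_atTop (Finset.univ.sup i)] with N hNM
    exact (main N (fun m => le_trans (Finset.le_sup (Finset.mem_univ m)) hNM)).symm
  exact Filter.Tendsto.congr' hev tendsto_const_nhds
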